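/- arXiv:1912.09990 — 2 statements merged into one kernel-verified Lean document; each statement's English description precedes it below -/
import Mathlib

section
/- Let ν be a probability measure on ℝⁿ with finite second moments and let Q ∈ ℝ^{d×d} and R ∈ ℝ^{m×m} be symmetric positive definite. If P₁ and P₂ are symmetric positive definite d×d matrices that both satisfy the Riccati equation P = Q + F(P) − H(P)ᵀ(R + G(P))⁻¹H(P), then P₁ = P₂. -/
open MeasureTheory Matrix Filter
open scoped Kronecker

noncomputable section

/-- `A(w) = A₀ + Σᵢ w⁽ⁱ⁾ Aᵢ`. -/
def Amat {n d : ℕ} (A : Fin (n + 1) → Matrix (Fin d) (Fin d) ℝ) (w : Fin n → ℝ) :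
    Matrix (Fin d) (Fin d) ℝ :=
  A 0 + ∑ i : Fin n, w i • A i.succ

/-- `B(w) = B₀ + Σᵢ w⁽ⁱ⁾ Bᵢ`. -/
def Bmat {n d m : ℕ} (B : Fin (n + 1) → Matrix (Fin d) (Fin m) ℝ) (w : Fin n → ℝ) :
    Matrix (Fin d) (Fin m) ℝ :=
  B 0 + ∑ i : Fin n, w i • B i.succ

/-- `Ā₀`: the `((n+1)d) × d` vertical stacking of `A₀, A₁, …, Aₙ`. -/
def Abar {n d : ℕ} (A : Fin (n + 1) → Matrix (Fin d) (Fin d) ℝ) :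
    Matrix (Fin (n + 1) × Fin d) (Fin d) ℝ :=
  Matrix.of fun p j => A p.1 p.2 j

/-- `B̄₀`: the `((n+1)d) × m` vertical stacking of `B₀, B₁, …, Bₙ`. -/
def Bbar {n d m : ℕ} (B : Fin (n + 1) → Matrix (Fin d) (Fin m) ℝ) :
    Matrix (Fin (n + 1) × Fin d) (Fin m) ℝ :=
  Matrix.of fun p j => B p.1 p.2 j

/-- `Σ̃ = [[1, μᵀ], [μ, Σ + μμᵀ]]`. -/
def tildeSigma {n : ℕ} (μ : Fin n → ℝ) (S : Matrix (Fin n) (Fin n) ℝ) :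
    Matrix (Fin (n + 1)) (Fin (n + 1)) ℝ :=
  Matrix.of fun i j =>
    Fin.cases (motive := fun _ => ℝ)
      (Fin.cases (motive := fun _ => ℝ) (1 : ℝ) (fun j' => μ j') j)
      (fun i' => Fin.cases (motive := fun _ => ℝ) (μ i')
        (fun j' => S i' j' + μ i' * μ j') j) i

/-- `F(P) = Ā₀ᵀ(Σ̃ ⊗ P)Ā₀`. -/
def Fm {n d : ℕ} (A : Fin (n + 1) → Matrix (Fin d) (Fin d) ℝ)
    (St : Matrix (Fin (n + 1)) (Fin (n + 1)) ℝ) (P : Matrix (Fin d) (Fin d) ℝ) :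
    Matrix (Fin d) (Fin d) ℝ :=
  (Abar A)ᵀ * (St ⊗ₖ P) * Abar A

/-- `G(P) = B̄₀ᵀ(Σ̃ ⊗ P)B̄₀`. -/
def Gm {n d m : ℕ} (B : Fin (n + 1) → Matrix (Fin d) (Fin m) ℝ)
    (St : Matrix (Fin (n + 1)) (Fin (n + 1)) ℝ) (P : Matrix (Fin d) (Fin d) ℝ) :
    Matrix (Fin m) (Fin m) ℝ :=
  (Bbar B)ᵀ * (St ⊗ₖ P) * Bbar B

/-- `H(P) = B̄₀ᵀ(Σ̃ ⊗ P)Ā₀`. -/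
def Hm {n d m : ℕ} (A : Fin (n + 1) → Matrix (Fin d) (Fin d) ℝ)
    (B : Fin (n + 1) → Matrix (Fin d) (Fin m) ℝ)
    (St : Matrix (Fin (n + 1)) (Fin (n + 1)) ℝ) (P : Matrix (Fin d) (Fin d) ℝ) :
    Matrix (Fin m) (Fin d) ℝ :=
  (Bbar B)ᵀ * (St ⊗ₖ P) * Abar A


section polar
variable {k : Type*} [Fintype k] [DecidableEq k]

lemma herm_zero_of_qf {X : Matrix k k ℝ} (hX : X.IsHermitian)
    (h : ∀ x : k → ℝ, x ⬝ᵥ X *ᵥ x = 0) : X = 0 := by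
  ext i j
  have hsym : X j i = X i j := by
    have := congrFun (congrFun hX.symm j) i
    simpa [Matrix.conjTranspose_apply] using this
  have hii := h (Pi.single i 1)
  have hjj := h (Pi.single j 1)
  have hij := h (Pi.single i 1 + Pi.single j 1)
  simp only [Matrix.mulVec_add, Matrix.add_mulVec, Matrix.mulVec_single, dotProduct_add,
    add_dotProduct, single_dotProduct, Pi.add_apply, mul_one, one_mul,
    MulOpposite.op_one, one_smul, Matrix.col_apply] at hii hjj hij
  -- hij : X i i + X j i + (X i j + X j j) = 0 roughly
  simp only [Matrix.zero_apply]
  nlinarith [hsym]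

end polar

section aux
variable {k l : Type*} [Fintype k] [Fintype l] [DecidableEq k]

lemma psd_smul {M : Matrix k k ℝ} (hM : M.PosSemidef) {a : ℝ} (ha : 0 ≤ a) :
    (a • M).PosSemidef := by
  rw [posSemidef_iff_dotProduct_mulVec]
  constructor
  · have h1 := hM.1
    unfold Matrix.IsHermitian at *
    rw [Matrix.conjTranspose_smul, h1]
    simp
  · intro x
    have h2 := hM.dotProduct_mulVec_nonneg x
    simp only [smul_mulVec, dotProduct_smul, smul_eq_mul, star_trivial] at *
    positivity

lemma psd_kron {S : Matrix l l ℝ} {P : Matrix k k ℝ} (hS : S.PosSemidef) (hP : P.PosSemidef) :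
    (S ⊗ₖ P).PosSemidef := by
  exact hS.kronecker hP

lemma psd_conj {M : Matrix k k ℝ} (hM : M.PosSemidef) (L : Matrix k l ℝ) :
    (Lᵀ * M * L).PosSemidef := by
  rw [← conjTranspose_eq_transpose_of_trivial]
  exact hM.conjTranspose_mul_mul_same L

lemma psd_chain {X Y Z : Matrix k k ℝ} (h1 : (Y - X).PosSemidef) (h2 : (Z - Y).PosSemidef) :
    (Z - X).PosSemidef := by
  have := h1.add h2
  rwa [sub_add_sub_cancel'] at this

lemma kron_sub (S : Matrix l l ℝ) (X Y : Matrix k k ℝ) :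
    S ⊗ₖ (X - Y) = S ⊗ₖ X - S ⊗ₖ Y := by
  ext ⟨i, a⟩ ⟨j, b⟩
  simp [Matrix.kroneckerMap_apply, mul_sub]

lemma expand_L {a b c : Type*} [Fintype a] [Fintype b] [Fintype c]
    (M : Matrix a a ℝ) (hM : Mᵀ = M) (Ab : Matrix a b ℝ) (Bb : Matrix a c ℝ)
    (K : Matrix c b ℝ) :
    (Ab + Bb * K)ᵀ * M * (Ab + Bb * K) =
      Abᵀ * M * Ab + (Bbᵀ * M * Ab)ᵀ * K + Kᵀ * (Bbᵀ * M * Ab) +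
        Kᵀ * (Bbᵀ * M * Bb) * K := by
  simp only [Matrix.transpose_add, Matrix.transpose_mul, Matrix.add_mul, Matrix.mul_add,
    Matrix.mul_assoc, hM, Matrix.transpose_transpose]
  abel

lemma cs_identity {p q : Type*} [Fintype p] [Fintype q] [DecidableEq q]
    (W : Matrix q q ℝ) (hW : Wᵀ = W) (hWu : IsUnit W.det) (H K' : Matrix q p ℝ) :
    K'ᵀ * H + Hᵀ * K' + K'ᵀ * W * K' =
      (K' + W⁻¹ * H)ᵀ * W * (K' + W⁻¹ * H) - Hᵀ * W⁻¹ * H := by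
  have hWt : (W⁻¹)ᵀ = W⁻¹ := by rw [Matrix.transpose_nonsing_inv, hW]
  rw [Matrix.transpose_add, Matrix.transpose_mul, hWt]
  simp only [Matrix.add_mul, Matrix.mul_add, Matrix.mul_assoc]
  simp only [Matrix.mul_nonsing_inv_cancel_left _ _ hWu,
    Matrix.nonsing_inv_mul_cancel_left _ _ hWu]
  abel


lemma qf_smul (M : Matrix k k ℝ) (a : ℝ) (x : k → ℝ) :
    (a • x) ⬝ᵥ M *ᵥ (a • x) = a ^ 2 * (x ⬝ᵥ M *ᵥ x) := by
  rw [Matrix.mulVec_smul, dotProduct_smul, smul_dotProduct]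
  simp [smul_eq_mul]; ring

lemma qf_continuous (M : Matrix k k ℝ) : Continuous fun x : k → ℝ => x ⬝ᵥ M *ᵥ x := by
  apply continuous_finset_sum
  intro i _
  exact (continuous_apply i).mul
    (continuous_finset_sum _ fun j _ => continuous_const.mul (continuous_apply j))

lemma exists_smul_sub_posSemidef (X P : Matrix k k ℝ) (hX : X.IsHermitian) (hP : P.PosDef) :
    ∃ c : ℝ, 0 < c ∧ (c • P - X).PosSemidef := by
  have key : ∃ c : ℝ, 0 < c ∧ ∀ x : k → ℝ, x ⬝ᵥ X *ᵥ x ≤ c * (x ⬝ᵥ P *ᵥ x) := by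
    rcases isEmpty_or_nonempty k with hk | hk
    · exact ⟨1, one_pos, fun x => by
        have : x = 0 := funext (fun i => (IsEmpty.false i).elim)
        simp [this]⟩
    · have hsph : (Metric.sphere (0 : k → ℝ) 1).Nonempty :=
        NormedSpace.sphere_nonempty.mpr zero_le_one
      have hcpt : IsCompact (Metric.sphere (0 : k → ℝ) 1) := isCompact_sphere 0 1
      obtain ⟨xf, hxf, hxfmax⟩ := hcpt.exists_isMaxOn hsph (qf_continuous X).continuousOn
      obtain ⟨xg, hxg, hxgmin⟩ := hcpt.exists_isMinOn hsph (qf_continuous P).continuousOn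
      set fmax := xf ⬝ᵥ X *ᵥ xf
      set gmin := xg ⬝ᵥ P *ᵥ xg
      have hxgne : xg ≠ 0 := by
        intro h0
        have := Metric.mem_sphere.mp hxg
        simp [h0] at this
      have hgmin : 0 < gmin := hP.dotProduct_mulVec_pos hxgne |>.trans_eq (by simp [gmin])
      refine ⟨max (fmax / gmin) 1, lt_max_of_lt_right one_pos, fun x => ?_⟩
      rcases eq_or_ne x 0 with rfl | hx
      · simp
      · have hnx : 0 < ‖x‖ := norm_pos_iff.mpr hx
        set u : k → ℝ := ‖x‖⁻¹ • x with hu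
        have hus : u ∈ Metric.sphere (0 : k → ℝ) 1 := by
          simp [hu, norm_smul, abs_of_pos (inv_pos.mpr hnx), inv_mul_cancel₀ hnx.ne']
        have hxu : x = ‖x‖ • u := by
          rw [hu, smul_smul, mul_inv_cancel₀ hnx.ne', one_smul]
        have h1 : x ⬝ᵥ X *ᵥ x = ‖x‖ ^ 2 * (u ⬝ᵥ X *ᵥ u) := by
          conv_lhs => rw [hxu]
          rw [qf_smul]
        have h2 : x ⬝ᵥ P *ᵥ x = ‖x‖ ^ 2 * (u ⬝ᵥ P *ᵥ u) := by
          conv_lhs => rw [hxu]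
          rw [qf_smul]
        have hf : u ⬝ᵥ X *ᵥ u ≤ fmax := hxfmax hus
        have hg : gmin ≤ u ⬝ᵥ P *ᵥ u := hxgmin hus
        have hc : fmax ≤ max (fmax / gmin) 1 * gmin := by
          calc fmax = fmax / gmin * gmin := by field_simp
          _ ≤ max (fmax / gmin) 1 * gmin := by
              apply mul_le_mul_of_nonneg_right (le_max_left _ _) hgmin.le
        calc x ⬝ᵥ X *ᵥ x = ‖x‖ ^ 2 * (u ⬝ᵥ X *ᵥ u) := h1
          _ ≤ ‖x‖ ^ 2 * (max (fmax / gmin) 1 * gmin) :=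
              mul_le_mul_of_nonneg_left (hf.trans hc) (sq_nonneg _)
          _ ≤ ‖x‖ ^ 2 * (max (fmax / gmin) 1 * (u ⬝ᵥ P *ᵥ u)) :=
              mul_le_mul_of_nonneg_left (mul_le_mul_of_nonneg_left hg
                (le_of_lt (lt_max_of_lt_right one_pos))) (sq_nonneg _)
          _ = max (fmax / gmin) 1 * (x ⬝ᵥ P *ᵥ x) := by rw [h2]; ring
  obtain ⟨c, hc, hcle⟩ := key
  refine ⟨c, hc, Matrix.PosSemidef.of_dotProduct_mulVec_nonneg ?_ fun x => ?_⟩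
  · have h1 : (c • P - X)ᴴ = c • Pᴴ - Xᴴ := by
      rw [Matrix.conjTranspose_sub, Matrix.conjTranspose_smul]; simp
    rw [Matrix.IsHermitian, h1, hP.1, hX]
  · have := hcle x
    simp only [star_trivial, Matrix.sub_mulVec, Matrix.smul_mulVec, dotProduct_sub,
      dotProduct_smul, smul_eq_mul]
    linarith

end aux

lemma ricc_key {n d m : ℕ}
    (A : Fin (n + 1) → Matrix (Fin d) (Fin d) ℝ)
    (B : Fin (n + 1) → Matrix (Fin d) (Fin m) ℝ)
    (St : Matrix (Fin (n + 1)) (Fin (n + 1)) ℝ) (hSt : St.PosSemidef)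
    (Q : Matrix (Fin d) (Fin d) ℝ) (hQ : Q.PosDef)
    (R : Matrix (Fin m) (Fin m) ℝ) (hR : R.PosDef)
    (P₁ P₂ : Matrix (Fin d) (Fin d) ℝ) (hP₁ : P₁.PosDef) (hP₂ : P₂.PosDef)
    (hRic₁ : P₁ = Q + Fm A St P₁ - (Hm A B St P₁)ᵀ * (R + Gm B St P₁)⁻¹ * Hm A B St P₁)
    (hRic₂ : P₂ = Q + Fm A St P₂ - (Hm A B St P₂)ᵀ * (R + Gm B St P₂)⁻¹ * Hm A B St P₂) :
    ∀ x : Fin d → ℝ, x ⬝ᵥ (P₁ - P₂) *ᵥ x ≤ 0 := by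
  -- basic symmetry facts
  have hStt : Stᵀ = St := by
    rw [← conjTranspose_eq_transpose_of_trivial]; exact hSt.1
  have hPt : ∀ {P : Matrix (Fin d) (Fin d) ℝ}, P.PosDef → Pᵀ = P := fun hP => by
    rw [← conjTranspose_eq_transpose_of_trivial]; exact hP.1
  have hMt : ∀ {P : Matrix (Fin d) (Fin d) ℝ}, Pᵀ = P → (St ⊗ₖ P)ᵀ = St ⊗ₖ P := by
    intro P hP
    rw [← Matrix.kroneckerMap_transpose, hStt, hP]
  have hMpsd : ∀ {P : Matrix (Fin d) (Fin d) ℝ}, P.PosSemidef → (St ⊗ₖ P).PosSemidef :=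
    fun hP => psd_kron hSt hP
  -- the two closed-loop quantities
  set H₁ := Hm A B St P₁ with hH₁
  set H₂ := Hm A B St P₂ with hH₂
  set W₁ := R + Gm B St P₁ with hW₁
  set W₂ := R + Gm B St P₂ with hW₂
  have hGpsd : ∀ {P : Matrix (Fin d) (Fin d) ℝ}, P.PosSemidef → (Gm B St P).PosSemidef :=
    fun hP => psd_conj (hMpsd hP) _
  have hW₁pd : W₁.PosDef := hR.add_posSemidef (hGpsd hP₁.posSemidef)
  have hW₂pd : W₂.PosDef := hR.add_posSemidef (hGpsd hP₂.posSemidef)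
  have hW₁t : W₁ᵀ = W₁ := by
    rw [← conjTranspose_eq_transpose_of_trivial]; exact hW₁pd.1
  have hW₂t : W₂ᵀ = W₂ := by
    rw [← conjTranspose_eq_transpose_of_trivial]; exact hW₂pd.1
  have hW₁u : IsUnit W₁.det := isUnit_iff_ne_zero.mpr hW₁pd.det_pos.ne'
  have hW₂u : IsUnit W₂.det := isUnit_iff_ne_zero.mpr hW₂pd.det_pos.ne'
  have hGt : ∀ {P : Matrix (Fin d) (Fin d) ℝ}, Pᵀ = P → (Gm B St P)ᵀ = Gm B St P := by
    intro P hP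
    unfold Gm
    rw [Matrix.transpose_mul, Matrix.transpose_mul, Matrix.transpose_transpose, hMt hP,
      Matrix.mul_assoc]
  have hWt : ∀ {P : Matrix (Fin d) (Fin d) ℝ}, Pᵀ = P → (R + Gm B St P)ᵀ = R + Gm B St P := by
    intro P hP
    rw [Matrix.transpose_add, hGt hP,
      show Rᵀ = R from by rw [← conjTranspose_eq_transpose_of_trivial]; exact hR.1]
  have hWpd : ∀ {P : Matrix (Fin d) (Fin d) ℝ}, P.PosSemidef → (R + Gm B St P).PosDef :=
    fun hP => hR.add_posSemidef (hGpsd hP)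
  have hWu : ∀ {P : Matrix (Fin d) (Fin d) ℝ}, P.PosSemidef → IsUnit ((R + Gm B St P).det) :=
    fun hP => isUnit_iff_ne_zero.mpr (hWpd hP).det_pos.ne'
  set K₂ : Matrix (Fin m) (Fin d) ℝ := -(W₂⁻¹ * H₂) with hK₂
  set L₂ := Abar A + Bbar B * K₂ with hL₂
  -- central identity for the gain K₂ and any psd symmetric P
  have idK : ∀ (P : Matrix (Fin d) (Fin d) ℝ), P.PosSemidef →
      K₂ᵀ * R * K₂ + L₂ᵀ * (St ⊗ₖ P) * L₂ =
        Fm A St P +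
          ((K₂ + (R + Gm B St P)⁻¹ * Hm A B St P)ᵀ * (R + Gm B St P) *
            (K₂ + (R + Gm B St P)⁻¹ * Hm A B St P) -
          (Hm A B St P)ᵀ * (R + Gm B St P)⁻¹ * Hm A B St P) := by
    intro P hPpsd
    have hPsym : Pᵀ = P := by
      rw [← conjTranspose_eq_transpose_of_trivial]; exact hPpsd.1
    have hexp' : L₂ᵀ * (St ⊗ₖ P) * L₂ =
        Fm A St P + (Hm A B St P)ᵀ * K₂ + K₂ᵀ * Hm A B St P +
          K₂ᵀ * Gm B St P * K₂ := by
      rw [hL₂]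
      exact expand_L (St ⊗ₖ P) (hMt hPsym) (Abar A) (Bbar B) K₂
    have hcs := cs_identity (R + Gm B St P) (hWt hPsym) (hWu hPpsd) (Hm A B St P) K₂
    rw [hexp', ← hcs]
    simp only [Matrix.mul_add, Matrix.add_mul]
    abel
  -- exact identity for P₂ (the gain is optimal there)
  have step₂ : P₂ = Q + K₂ᵀ * R * K₂ + L₂ᵀ * (St ⊗ₖ P₂) * L₂ := by
    have h0 : K₂ + W₂⁻¹ * H₂ = 0 := by rw [hK₂]; exact neg_add_cancel _
    have := idK P₂ hP₂.posSemidef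
    rw [← hW₂, ← hH₂, h0] at this
    simp only [Matrix.transpose_zero, Matrix.zero_mul, Matrix.mul_zero, zero_sub] at this
    set F2 := Fm A St P₂ with hF2
    rw [add_assoc, this, hRic₂]
    abel
  -- inequality for P₁ (the gain K₂ is suboptimal there)
  have ineq₁ : (Q + K₂ᵀ * R * K₂ + L₂ᵀ * (St ⊗ₖ P₁) * L₂ - P₁).PosSemidef := by
    have := idK P₁ hP₁.posSemidef
    rw [← hW₁, ← hH₁] at this
    have heq : Q + K₂ᵀ * R * K₂ + L₂ᵀ * (St ⊗ₖ P₁) * L₂ - P₁ =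
        (K₂ + W₁⁻¹ * H₁)ᵀ * W₁ * (K₂ + W₁⁻¹ * H₁) := by
      set F1 := Fm A St P₁ with hF1
      rw [add_assoc, this, hRic₁]
      abel
    rw [heq]
    exact psd_conj (hWpd hP₁.posSemidef).posSemidef _
  -- P₁ - P₂ ≤ T (P₁ - P₂) for T X = L₂ᵀ (St ⊗ X) L₂
  have hz : P₂ - (Q + K₂ᵀ * R * K₂ + L₂ᵀ * (St ⊗ₖ P₂) * L₂) = 0 := sub_eq_zero.mpr step₂
  have hDelta : (L₂ᵀ * (St ⊗ₖ (P₁ - P₂)) * L₂ - (P₁ - P₂)).PosSemidef := by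
    have heq : L₂ᵀ * (St ⊗ₖ (P₁ - P₂)) * L₂ - (P₁ - P₂) =
        Q + K₂ᵀ * R * K₂ + L₂ᵀ * (St ⊗ₖ P₁) * L₂ - P₁ := by
      calc L₂ᵀ * (St ⊗ₖ (P₁ - P₂)) * L₂ - (P₁ - P₂)
          = Q + K₂ᵀ * R * K₂ + L₂ᵀ * (St ⊗ₖ P₁) * L₂ - P₁ +
            (P₂ - (Q + K₂ᵀ * R * K₂ + L₂ᵀ * (St ⊗ₖ P₂) * L₂)) := by
            rw [kron_sub, Matrix.mul_sub, Matrix.sub_mul]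
            abel
        _ = Q + K₂ᵀ * R * K₂ + L₂ᵀ * (St ⊗ₖ P₁) * L₂ - P₁ := by rw [hz, add_zero]
    rw [heq]
    exact ineq₁
  -- choose ε with 0 < ε ≤ 1 and (Q - ε • P₂).PosSemidef
  obtain ⟨c₀, hc₀, hc₀psd⟩ := exists_smul_sub_posSemidef P₂ Q hP₂.1 hQ
  set ε := min (1 / c₀) 1 with hε
  have hεpos : 0 < ε := lt_min (by positivity) one_pos
  have hεle : ε ≤ 1 := min_le_right _ _
  have hQeps : (Q - ε • P₂).PosSemidef := by
    have heq : Q - ε • P₂ = (1 / c₀) • (c₀ • Q - P₂) + (1 / c₀ - ε) • P₂ := by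
      rw [smul_sub, smul_smul]
      rw [one_div_mul_cancel hc₀.ne', one_smul, sub_smul]
      abel
    rw [heq]
    exact (psd_smul hc₀psd (by positivity)).add
      (psd_smul hP₂.posSemidef (by simp [hε, min_le_left]))
  -- T P₂ ≤ (1 - ε) • P₂
  have hTP : ((1 - ε) • P₂ - L₂ᵀ * (St ⊗ₖ P₂) * L₂).PosSemidef := by
    have heq : (1 - ε) • P₂ - L₂ᵀ * (St ⊗ₖ P₂) * L₂ =
        (Q - ε • P₂) + K₂ᵀ * R * K₂ := by
      calc (1 - ε) • P₂ - L₂ᵀ * (St ⊗ₖ P₂) * L₂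
          = (Q - ε • P₂) + K₂ᵀ * R * K₂ +
            (P₂ - (Q + K₂ᵀ * R * K₂ + L₂ᵀ * (St ⊗ₖ P₂) * L₂)) := by
            rw [sub_smul, one_smul]; abel
        _ = (Q - ε • P₂) + K₂ᵀ * R * K₂ := by rw [hz, add_zero]
    rw [heq]
    exact hQeps.add (psd_conj hR.posSemidef K₂)
  -- bound P₁ - P₂ ≤ c • P₂
  have hΔherm : (P₁ - P₂).IsHermitian := hP₁.1.sub hP₂.1
  obtain ⟨c, hc, hcpsd⟩ := exists_smul_sub_posSemidef (P₁ - P₂) P₂ hΔherm hP₂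
  -- by induction, P₁ - P₂ ≤ (c * (1-ε)^N) • P₂
  have claim : ∀ N : ℕ, ((c * (1 - ε) ^ N) • P₂ - (P₁ - P₂)).PosSemidef := by
    intro N
    induction N with
    | zero => simpa using hcpsd
    | succ N ih =>
      set a := c * (1 - ε) ^ N with ha
      have hapos : 0 ≤ a := by
        exact mul_nonneg hc.le (pow_nonneg (by linarith) N)
      -- monotonicity of T applied to ih
      have hmono : (L₂ᵀ * (St ⊗ₖ (a • P₂)) * L₂ -
          L₂ᵀ * (St ⊗ₖ (P₁ - P₂)) * L₂).PosSemidef := by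
        have heq : L₂ᵀ * (St ⊗ₖ (a • P₂)) * L₂ - L₂ᵀ * (St ⊗ₖ (P₁ - P₂)) * L₂ =
            L₂ᵀ * (St ⊗ₖ (a • P₂ - (P₁ - P₂))) * L₂ := by
          simp only [kron_sub, Matrix.mul_sub, Matrix.sub_mul]
        rw [heq]
        exact psd_conj (hMpsd ih) _
      have hTsmul : L₂ᵀ * (St ⊗ₖ (a • P₂)) * L₂ = a • (L₂ᵀ * (St ⊗ₖ P₂) * L₂) := by
        rw [Matrix.kronecker_smul, Matrix.mul_smul, Matrix.smul_mul]
      have hsc : ((c * (1 - ε) ^ (N + 1)) • P₂ - a • (L₂ᵀ * (St ⊗ₖ P₂) * L₂)).PosSemidef := by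
        have heq : (c * (1 - ε) ^ (N + 1)) • P₂ - a • (L₂ᵀ * (St ⊗ₖ P₂) * L₂) =
            a • ((1 - ε) • P₂ - L₂ᵀ * (St ⊗ₖ P₂) * L₂) := by
          rw [smul_sub, smul_smul, ha]
          ring_nf
        rw [heq]
        exact psd_smul hTP hapos
      rw [hTsmul] at hmono
      exact psd_chain hDelta (psd_chain hmono hsc)
  -- take the limit
  intro x
  have hq : ∀ N : ℕ, x ⬝ᵥ (P₁ - P₂) *ᵥ x ≤ c * (1 - ε) ^ N * (x ⬝ᵥ P₂ *ᵥ x) := by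
    intro N
    have := (claim N).dotProduct_mulVec_nonneg x
    simp only [star_trivial, Matrix.sub_mulVec, Matrix.smul_mulVec, dotProduct_sub,
      dotProduct_smul, smul_eq_mul] at this
    rw [Matrix.sub_mulVec, dotProduct_sub]
    linarith
  have hlim : Tendsto (fun N : ℕ => c * (1 - ε) ^ N * (x ⬝ᵥ P₂ *ᵥ x)) atTop (nhds 0) := by
    have h1 : Tendsto (fun N : ℕ => (1 - ε) ^ N) atTop (nhds 0) := by
      apply tendsto_pow_atTop_nhds_zero_of_lt_one (by linarith) (by linarith)
    have := (h1.const_mul c).mul_const (x ⬝ᵥ P₂ *ᵥ x)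
    simpa [mul_assoc] using this
  exact ge_of_tendsto' hlim hq


lemma tildeSigma_posSemidef {n : ℕ}
    (ν : Measure (Fin n → ℝ)) [IsProbabilityMeasure ν]
    (hint1 : ∀ i, Integrable (fun w : Fin n → ℝ => w i) ν)
    (hint2 : ∀ i j, Integrable (fun w : Fin n → ℝ => w i * w j) ν)
    (μ : Fin n → ℝ) (hμ : ∀ i, μ i = ∫ w, w i ∂ν)
    (Sg : Matrix (Fin n) (Fin n) ℝ)
    (hSg : ∀ i j, Sg i j = ∫ w, (w i - μ i) * (w j - μ j) ∂ν) :
    (tildeSigma μ Sg).PosSemidef := by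
  have hm2 : ∀ i j, ∫ w, w i * w j ∂ν = Sg i j + μ i * μ j := by
    intro i j
    have hexp : (fun w : Fin n → ℝ => (w i - μ i) * (w j - μ j)) =
        fun w => w i * w j - (μ i * w j + μ j * w i - μ i * μ j) := by
      funext w; ring
    have hintb : Integrable (fun w : Fin n → ℝ => μ i * w j + μ j * w i - μ i * μ j) ν :=
      (((hint1 j).const_mul (μ i)).add ((hint1 i).const_mul (μ j))).sub (integrable_const _)
    have h1 : Sg i j = (∫ w, w i * w j ∂ν) -
        ∫ w, (μ i * w j + μ j * w i - μ i * μ j) ∂ν := by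
      rw [hSg i j, hexp, integral_sub (hint2 i j) hintb]
    have hadd : Integrable (fun w : Fin n → ℝ => μ i * w j + μ j * w i) ν :=
      ((hint1 j).const_mul (μ i)).add ((hint1 i).const_mul (μ j))
    have h2 : ∫ w, (μ i * w j + μ j * w i - μ i * μ j) ∂ν = μ i * μ j := by
      rw [integral_sub hadd (integrable_const _),
        integral_add ((hint1 j).const_mul ((μ i))) ((hint1 i).const_mul (μ j)),
        integral_const_mul, integral_const_mul, integral_const]
      simp only [measure_univ, probReal_univ, ENNReal.toReal_one, smul_eq_mul, one_mul]
      rw [← hμ i, ← hμ j]; ring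
    rw [h1, h2]; ring
  rw [posSemidef_iff_dotProduct_mulVec]
  constructor
  · rw [Matrix.IsHermitian]
    ext i j
    rw [Matrix.conjTranspose_apply, star_trivial]
    induction i using Fin.cases with
    | zero =>
      induction j using Fin.cases with
      | zero => rfl
      | succ j' => simp [tildeSigma]
    | succ i' =>
      induction j using Fin.cases with
      | zero => simp [tildeSigma]
      | succ j' =>
        simp only [tildeSigma, Matrix.of_apply, Fin.cases_succ]
        have hsym : Sg j' i' = Sg i' j' := by
          rw [hSg, hSg]
          exact integral_congr_ae (Eventually.of_forall fun w => by ring)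
        rw [hsym]; ring
  · intro v
    rw [star_trivial]
    set s : Fin n → ℝ := fun i => v i.succ with hs
    have hf : Integrable (fun w : Fin n → ℝ => ∑ i, s i * w i) ν :=
      integrable_finset_sum _ fun i _ => (hint1 i).const_mul _
    have hgsq : Integrable (fun w : Fin n → ℝ => ∑ i, ∑ j, s i * s j * (w i * w j)) ν :=
      integrable_finset_sum _ fun i _ =>
        integrable_finset_sum _ fun j _ => (hint2 i j).const_mul _
    have hR : ∫ w, (v 0 + ∑ i, s i * w i) ^ 2 ∂ν =
        v 0 ^ 2 + 2 * v 0 * (∑ i, s i * μ i) +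
          ∑ i, ∑ j, s i * s j * (Sg i j + μ i * μ j) := by
      have hexp : (fun w : Fin n → ℝ => (v 0 + ∑ i, s i * w i) ^ 2) =
          fun w => (v 0 ^ 2 + (2 * v 0) * (∑ i, s i * w i)) +
            ∑ i, ∑ j, s i * s j * (w i * w j) := by
        funext w
        have hsq : (∑ i, s i * w i) ^ 2 = ∑ i, ∑ j, s i * s j * (w i * w j) := by
          rw [sq, Finset.sum_mul_sum]
          exact Finset.sum_congr rfl fun i _ => Finset.sum_congr rfl fun j _ => by ring
        rw [add_sq, hsq]
      have hc1 : Integrable (fun w : Fin n → ℝ =>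
          v 0 ^ 2 + (2 * v 0) * (∑ i, s i * w i)) ν :=
        (integrable_const _).add (hf.const_mul _)
      rw [hexp, integral_add hc1 hgsq,
        integral_add (integrable_const _) (hf.const_mul _), integral_const,
        integral_const_mul, integral_finset_sum _ fun i _ => (hint1 i).const_mul _,
        integral_finset_sum _ fun i _ =>
          integrable_finset_sum _ fun j _ => (hint2 i j).const_mul _]
      have hin : ∀ i : Fin n, ∫ w, ∑ j, s i * s j * (w i * w j) ∂ν
          = ∑ j, s i * s j * (Sg i j + μ i * μ j) := by
        intro i
        rw [integral_finset_sum _ fun j _ => (hint2 i j).const_mul _]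
        exact Finset.sum_congr rfl fun j _ => by rw [integral_const_mul, hm2]
      simp only [integral_const_mul, hm2, measure_univ, probReal_univ, ENNReal.toReal_one, smul_eq_mul,
        one_mul, hin, ← hμ]
    have hL : v ⬝ᵥ (tildeSigma μ Sg) *ᵥ v =
        v 0 ^ 2 + 2 * v 0 * (∑ i, s i * μ i) +
          ∑ i, ∑ j, s i * s j * (Sg i j + μ i * μ j) := by
      simp only [dotProduct, Matrix.mulVec, Fin.sum_univ_succ, tildeSigma, Matrix.of_apply,
        Fin.cases_zero, Fin.cases_succ]
      simp only [show ∀ i : Fin n, v i.succ = s i from fun i => rfl]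
      have h2 : ∑ i, s i * (μ i * v 0 + ∑ j, (Sg i j + μ i * μ j) * s j)
          = (∑ i, s i * μ i) * v 0 + ∑ i, ∑ j, s i * s j * (Sg i j + μ i * μ j) := by
        rw [Finset.sum_mul, ← Finset.sum_add_distrib]
        refine Finset.sum_congr rfl fun i _ => ?_
        rw [mul_add, Finset.mul_sum]
        congr 1
        · ring
        · exact Finset.sum_congr rfl fun j _ => by ring
      rw [h2]
      have h3 : ∑ j, μ j * s j = ∑ j, s j * μ j :=
        Finset.sum_congr rfl fun j _ => mul_comm _ _
      rw [h3]
      ring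
    rw [hL, ← hR]
    exact integral_nonneg fun w => sq_nonneg _


/-- Symmetric positive definite solutions of the Riccati equation
`P = Q + F(P) − H(P)ᵀ(R + G(P))⁻¹H(P)` are unique. -/
theorem stmt12 {n d m : ℕ}
    (A : Fin (n + 1) → Matrix (Fin d) (Fin d) ℝ)
    (B : Fin (n + 1) → Matrix (Fin d) (Fin m) ℝ)
    (ν : Measure (Fin n → ℝ)) [IsProbabilityMeasure ν]
    (hint1 : ∀ i, Integrable (fun w : Fin n → ℝ => w i) ν)
    (hint2 : ∀ i j, Integrable (fun w : Fin n → ℝ => w i * w j) ν)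
    (μ : Fin n → ℝ) (hμ : ∀ i, μ i = ∫ w, w i ∂ν)
    (Sg : Matrix (Fin n) (Fin n) ℝ)
    (hSg : ∀ i j, Sg i j = ∫ w, (w i - μ i) * (w j - μ j) ∂ν)
    (Q : Matrix (Fin d) (Fin d) ℝ) (hQ : Q.PosDef)
    (R : Matrix (Fin m) (Fin m) ℝ) (hR : R.PosDef)
    (P₁ P₂ : Matrix (Fin d) (Fin d) ℝ) (hP₁ : P₁.PosDef) (hP₂ : P₂.PosDef)
    (hRic₁ : P₁ = Q + Fm A (tildeSigma μ Sg) P₁ -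
      (Hm A B (tildeSigma μ Sg) P₁)ᵀ * (R + Gm B (tildeSigma μ Sg) P₁)⁻¹ *
        Hm A B (tildeSigma μ Sg) P₁)
    (hRic₂ : P₂ = Q + Fm A (tildeSigma μ Sg) P₂ -
      (Hm A B (tildeSigma μ Sg) P₂)ᵀ * (R + Gm B (tildeSigma μ Sg) P₂)⁻¹ *
        Hm A B (tildeSigma μ Sg) P₂) :
    P₁ = P₂ := by
  have hSt := tildeSigma_posSemidef ν hint1 hint2 μ hμ Sg hSg
  have h12 := ricc_key A B (tildeSigma μ Sg) hSt Q hQ R hR P₁ P₂ hP₁ hP₂ hRic₁ hRic₂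
  have h21 := ricc_key A B (tildeSigma μ Sg) hSt Q hQ R hR P₂ P₁ hP₂ hP₁ hRic₂ hRic₁
  have hzero : P₁ - P₂ = 0 := by
    apply herm_zero_of_qf (hP₁.1.sub hP₂.1)
    intro x
    have h1 := h12 x
    have h2 := h21 x
    rw [show P₂ - P₁ = -(P₁ - P₂) from by abel, Matrix.neg_mulVec, dotProduct_neg] at h2
    linarith
  exact sub_eq_zero.mp hzero

end
end

section
/- Let ν be a probability measure on ℝⁿ with finite second moments, let Q ∈ ℝ^{d×d} and R ∈ ℝ^{m×m} be symmetric positive definite, let P ∈ ℝ^{d×d} be symmetric positive definite satisfying the Riccati equation P = Q + F(P) − H(P)ᵀ(R + G(P))⁻¹H(P), and set K = −(R + G(P))⁻¹H(P). Then for every x₀ ∈ ℝ^d, the infinite-horizon closed-loop cost under the linear feedback u = Kx is finite and equals x₀ᵀ P x₀; that is, Σ_{k=0}^∞ tr((Q + KᵀRK) S_k(x₀)) = x₀ᵀ P x₀, where S_k(x₀) are the closed-loop second-moment matrices. -/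
open MeasureTheory Matrix Filter
open scoped Kronecker

noncomputable section

/-- Second-moment matrices of the autonomous system `x_{k+1} = M(w_k) x_k`. -/
def Sseq {n d : ℕ} (ν : Measure (Fin n → ℝ))
    (M : (Fin n → ℝ) → Matrix (Fin d) (Fin d) ℝ) (x₀ : Fin d → ℝ) :
    ℕ → Matrix (Fin d) (Fin d) ℝ
  | 0 => Matrix.vecMulVec x₀ x₀
  | k + 1 => Matrix.of fun i j => ∫ w, (M w * Sseq ν M x₀ k * (M w)ᵀ) i j ∂ν

section AuxLemmas

/-! ### Generic real-matrix lemmas -/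

lemma realCT {e f : Type*} (M : Matrix e f ℝ) : Mᴴ = Mᵀ := by
  ext i j; simp [Matrix.conjTranspose_apply]

lemma real_isHermitian {e : Type*} {M : Matrix e e ℝ} (h : Mᵀ = M) :
    M.IsHermitian := by
  unfold Matrix.IsHermitian
  rw [realCT, h]

lemma psd_trace_nonneg {d : ℕ} {A : Matrix (Fin d) (Fin d) ℝ} (hA : A.PosSemidef) :
    0 ≤ A.trace := by
  rw [Matrix.trace]
  apply Finset.sum_nonneg
  intro i _
  have h := hA.dotProduct_mulVec_nonneg (Pi.single i 1)
  simpa [Matrix.diag, dotProduct, Matrix.mulVec, Pi.single_apply, Finset.mul_sum, mul_ite,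
    Finset.sum_ite_eq', Finset.sum_ite_eq] using h

lemma trace_mul_nonneg' {d : ℕ} {A B : Matrix (Fin d) (Fin d) ℝ}
    (hA : A.PosSemidef) (hB : B.PosSemidef) : 0 ≤ (A * B).trace := by
  classical
  open scoped MatrixOrder in
  obtain ⟨X, rfl⟩ := CStarAlgebra.nonneg_iff_eq_star_mul_self.mp hA.nonneg
  rw [Matrix.star_eq_conjTranspose, Matrix.mul_assoc, Matrix.trace_mul_comm]
  exact psd_trace_nonneg (hB.mul_mul_conjTranspose_same X)

lemma kron_psd {N d : ℕ} {St : Matrix (Fin N) (Fin N) ℝ} {P : Matrix (Fin d) (Fin d) ℝ}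
    (hSt : St.PosSemidef) (hP : P.PosSemidef) : (St ⊗ₖ P).PosSemidef := by
  exact hSt.kronecker hP

/-! ### Series lemmas -/

lemma hasSum_telescope' {t : ℕ → ℝ} (h0 : ∀ k, 0 ≤ t k - t (k + 1))
    (hlim : Tendsto t atTop (nhds 0)) :
    HasSum (fun k => t k - t (k + 1)) (t 0) := by
  rw [hasSum_iff_tendsto_nat_of_nonneg h0]
  have h1 : ∀ n : ℕ, ∑ i ∈ Finset.range n, (t i - t (i + 1)) = t 0 - t n := fun n =>
    Finset.sum_range_sub' t n
  simp only [h1]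
  simpa using (tendsto_const_nhds : Tendsto (fun _ : ℕ => t 0) atTop _).sub hlim

lemma tendsto_zero_of_decay {t : ℕ → ℝ} {c : ℝ} (hc0 : 0 < c) (hc1 : c ≤ 1)
    (ht : ∀ k, 0 ≤ t k) (hdec : ∀ k, t (k + 1) ≤ (1 - c) * t k) :
    Tendsto t atTop (nhds 0) := by
  have key : ∀ k, t k ≤ (1 - c) ^ k * t 0 := by
    intro k; induction k with
    | zero => simp
    | succ k ih =>
      calc t (k + 1) ≤ (1 - c) * t k := hdec k
        _ ≤ (1 - c) * ((1 - c) ^ k * t 0) := by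
            apply mul_le_mul_of_nonneg_left ih (by linarith)
        _ = (1 - c) ^ (k + 1) * t 0 := by ring
  have h1 : Tendsto (fun k : ℕ => (1 - c) ^ k * t 0) atTop (nhds 0) := by
    have h2 := tendsto_pow_atTop_nhds_zero_of_lt_one (by linarith : (0:ℝ) ≤ 1 - c)
      (by linarith : 1 - c < 1)
    simpa using h2.mul_const (t 0)
  exact squeeze_zero ht key h1

/-! ### Comparison constant from positive definiteness -/

lemma quad_continuous {d : ℕ} (M : Matrix (Fin d) (Fin d) ℝ) :
    Continuous fun x : Fin d → ℝ => x ⬝ᵥ M *ᵥ x := by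
  simp only [dotProduct, Matrix.mulVec]
  apply continuous_finset_sum
  intro i _
  exact (continuous_apply i).mul (continuous_finset_sum _ fun j _ =>
    (continuous_const.mul (continuous_apply j)))

lemma quad_smul {d : ℕ} (M : Matrix (Fin d) (Fin d) ℝ) (r : ℝ) (x : Fin d → ℝ) :
    (r • x) ⬝ᵥ M *ᵥ (r • x) = r ^ 2 * (x ⬝ᵥ M *ᵥ x) := by
  rw [smul_dotProduct, Matrix.mulVec_smul, dotProduct_smul]
  simp [smul_eq_mul]; ring

lemma exists_c {d : ℕ} {Q P : Matrix (Fin d) (Fin d) ℝ} (hQ : Q.PosDef) (hP : P.PosDef) :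
    ∃ c : ℝ, 0 < c ∧ c ≤ 1 ∧ (Q - c • P).PosSemidef := by
  rcases Nat.eq_zero_or_pos d with hd | hd
  · subst hd
    refine ⟨1, one_pos, le_refl 1, Subsingleton.elim _ _, fun x => ?_⟩
    simp [Subsingleton.elim x 0]
  have : Nonempty (Fin d) := ⟨⟨0, hd⟩⟩
  have hnt : Nontrivial (Fin d → ℝ) := inferInstance
  have hsc : IsCompact (Metric.sphere (0 : Fin d → ℝ) 1) := isCompact_sphere _ _
  have hsn : (Metric.sphere (0 : Fin d → ℝ) 1).Nonempty :=
    NormedSpace.sphere_nonempty.2 zero_le_one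
  obtain ⟨xq, hxq, hminq⟩ := hsc.exists_isMinOn hsn (quad_continuous Q).continuousOn
  obtain ⟨xp, hxp, hmaxp⟩ := hsc.exists_isMaxOn hsn (quad_continuous P).continuousOn
  have hxq0 : xq ≠ 0 := by
    intro h; rw [h] at hxq; simp at hxq
  have hxp0 : xp ≠ 0 := by
    intro h; rw [h] at hxp; simp at hxp
  set mq := xq ⬝ᵥ Q *ᵥ xq with hmq
  set mp := xp ⬝ᵥ P *ᵥ xp with hmp
  have hmqpos : 0 < mq := by simpa using hQ.dotProduct_mulVec_pos hxq0
  have hmppos : 0 < mp := by simpa using hP.dotProduct_mulVec_pos hxp0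
  have hcomp : ∀ x : Fin d → ℝ, (mq / mp) * (x ⬝ᵥ P *ᵥ x) ≤ x ⬝ᵥ Q *ᵥ x := by
    intro x
    rcases eq_or_ne x 0 with rfl | hx0
    · simp
    · have hnx : (0:ℝ) < ‖x‖ := norm_pos_iff.2 hx0
      set u : Fin d → ℝ := ‖x‖⁻¹ • x with hu
      have hus : u ∈ Metric.sphere (0 : Fin d → ℝ) 1 := by
        simp [hu, norm_smul, abs_of_pos (inv_pos.2 hnx), inv_mul_cancel₀ hnx.ne']
      have hxu : x = ‖x‖ • u := by
        rw [hu, smul_smul, mul_inv_cancel₀ hnx.ne', one_smul]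
      have h1 : mq ≤ u ⬝ᵥ Q *ᵥ u := hminq hus
      have h2 : u ⬝ᵥ P *ᵥ u ≤ mp := hmaxp hus
      have e1 : x ⬝ᵥ Q *ᵥ x = ‖x‖ ^ 2 * (u ⬝ᵥ Q *ᵥ u) := by
        conv_lhs => rw [hxu]
        exact quad_smul Q ‖x‖ u
      have e2 : x ⬝ᵥ P *ᵥ x = ‖x‖ ^ 2 * (u ⬝ᵥ P *ᵥ u) := by
        conv_lhs => rw [hxu]
        exact quad_smul P ‖x‖ u
      rw [e1, e2]
      rw [div_mul_eq_mul_div, div_le_iff₀ hmppos]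
      have hB : ‖x‖ ^ 2 * mq ≤ ‖x‖ ^ 2 * (u ⬝ᵥ Q *ᵥ u) :=
        mul_le_mul_of_nonneg_left h1 (sq_nonneg _)
      nlinarith [sq_nonneg ‖x‖, hmppos.le, hmqpos.le, hB,
        mul_le_mul_of_nonneg_left h2 (sq_nonneg ‖x‖)]
  set c := min (mq / mp) 1 with hc
  have hcpos : 0 < c := lt_min (div_pos hmqpos hmppos) one_pos
  refine ⟨c, hcpos, min_le_right _ _, Matrix.PosSemidef.of_dotProduct_mulVec_nonneg ?_ ?_⟩
  · unfold Matrix.IsHermitian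
    rw [Matrix.conjTranspose_sub, Matrix.conjTranspose_smul, hQ.1.eq, hP.1.eq]
    norm_num
  · intro x
    have h1 := hcomp x
    have h2 : 0 ≤ x ⬝ᵥ P *ᵥ x := by simpa using hP.posSemidef.dotProduct_mulVec_nonneg x
    have h3 : c * (x ⬝ᵥ P *ᵥ x) ≤ (mq / mp) * (x ⬝ᵥ P *ᵥ x) :=
      mul_le_mul_of_nonneg_right (min_le_left _ _) h2
    have h4 : star x ⬝ᵥ (Q - c • P) *ᵥ x = x ⬝ᵥ Q *ᵥ x - c * (x ⬝ᵥ P *ᵥ x) := by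
      simp [Matrix.sub_mulVec, Matrix.smul_mulVec, dotProduct_sub, dotProduct_smul,
        smul_eq_mul]
    rw [h4]
    linarith

/-! ### Sum-rearrangement lemmas -/

lemma expandMXMt {N d : ℕ} (c : Fin N → ℝ) (C : Fin N → Matrix (Fin d) (Fin d) ℝ)
    (X : Matrix (Fin d) (Fin d) ℝ) :
    (∑ p, c p • C p) * X * (∑ q, c q • C q)ᵀ =
      ∑ p, ∑ q, (c p * c q) • (C p * X * (C q)ᵀ) := by
  rw [Matrix.transpose_sum]
  simp only [Matrix.transpose_smul, Finset.sum_mul, Finset.mul_sum, Matrix.smul_mul,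
    Matrix.mul_smul, smul_smul]
  rw [Finset.sum_comm]
  exact Finset.sum_congr rfl fun p _ => Finset.sum_congr rfl fun q _ => by rw [mul_comm (c q)]

lemma expandMtPM {N d : ℕ} (c : Fin N → ℝ) (C : Fin N → Matrix (Fin d) (Fin d) ℝ)
    (P : Matrix (Fin d) (Fin d) ℝ) :
    (∑ p, c p • C p)ᵀ * P * (∑ q, c q • C q) =
      ∑ p, ∑ q, (c p * c q) • ((C p)ᵀ * P * C q) := by
  rw [Matrix.transpose_sum]
  simp only [Matrix.transpose_smul, Finset.sum_mul, Finset.mul_sum, Matrix.smul_mul,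
    Matrix.mul_smul, smul_smul]
  rw [Finset.sum_comm]
  exact Finset.sum_congr rfl fun p _ => Finset.sum_congr rfl fun q _ => by rw [mul_comm (c q)]

lemma kron_stack {N d e f : ℕ} (D : Matrix (Fin N × Fin d) (Fin e) ℝ)
    (D' : Matrix (Fin N × Fin d) (Fin f) ℝ) (St : Matrix (Fin N) (Fin N) ℝ)
    (P : Matrix (Fin d) (Fin d) ℝ) :
    Dᵀ * (St ⊗ₖ P) * D' = ∑ p : Fin N, ∑ q : Fin N, St p q •
      ((Matrix.of fun a i => D (p, a) i)ᵀ * P * (Matrix.of fun b j => D' (q, b) j)) := by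
  ext i j
  simp only [Matrix.mul_apply, Matrix.sum_apply, Matrix.smul_apply, Matrix.transpose_apply,
    Matrix.kroneckerMap_apply, Matrix.of_apply, smul_eq_mul, Fintype.sum_prod_type,
    Finset.mul_sum, Finset.sum_mul]
  have key : ∀ f : Fin N → Fin d → Fin N → Fin d → ℝ,
      (∑ q, ∑ b, ∑ p, ∑ a, f p a q b) = ∑ p, ∑ q, ∑ b, ∑ a, f p a q b := by
    intro f
    calc (∑ q, ∑ b, ∑ p, ∑ a, f p a q b)
        = ∑ q, ∑ p, ∑ b, ∑ a, f p a q b :=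
          Finset.sum_congr rfl fun q _ => Finset.sum_comm
      _ = ∑ p, ∑ q, ∑ b, ∑ a, f p a q b := Finset.sum_comm
  rw [key fun p a q b => D (p, a) i * (St p q * P a b) * D' (q, b) j]
  apply Finset.sum_congr rfl; intro p _
  apply Finset.sum_congr rfl; intro q _
  apply Finset.sum_congr rfl; intro b _
  apply Finset.sum_congr rfl; intro a _
  ring

end AuxLemmas

section Probabilistic

/-- `wb w = (1, w)`. -/
def wb {n : ℕ} (w : Fin n → ℝ) : Fin (n + 1) → ℝ := Fin.cons 1 w

@[simp] lemma wb_zero {n : ℕ} (w : Fin n → ℝ) : wb w 0 = 1 := rfl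
@[simp] lemma wb_succ {n : ℕ} (w : Fin n → ℝ) (i : Fin n) : wb w i.succ = w i :=
  Fin.cons_succ _ _ _

section TS
variable {n : ℕ} (μ : Fin n → ℝ) (Sg : Matrix (Fin n) (Fin n) ℝ)

@[simp] lemma tildeSigma_zero_zero : tildeSigma μ Sg 0 0 = 1 := by simp [tildeSigma]
@[simp] lemma tildeSigma_zero_succ (j : Fin n) : tildeSigma μ Sg 0 j.succ = μ j := by
  simp [tildeSigma]
@[simp] lemma tildeSigma_succ_zero (i : Fin n) : tildeSigma μ Sg i.succ 0 = μ i := by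
  simp [tildeSigma]
@[simp] lemma tildeSigma_succ_succ (i j : Fin n) :
    tildeSigma μ Sg i.succ j.succ = Sg i j + μ i * μ j := by simp [tildeSigma]
end TS

variable {n : ℕ} {ν : Measure (Fin n → ℝ)} [IsProbabilityMeasure ν]
  (hint1 : ∀ i, Integrable (fun w : Fin n → ℝ => w i) ν)
  (hint2 : ∀ i j, Integrable (fun w : Fin n → ℝ => w i * w j) ν)
  {μ : Fin n → ℝ} (hμ : ∀ i, μ i = ∫ w, w i ∂ν)
  {Sg : Matrix (Fin n) (Fin n) ℝ}
  (hSg : ∀ i j, Sg i j = ∫ w, (w i - μ i) * (w j - μ j) ∂ν)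

include hint1 hint2 in
lemma wb_int (p q : Fin (n + 1)) : Integrable (fun w => wb w p * wb w q) ν := by
  induction p using Fin.cases with
  | zero =>
    induction q using Fin.cases with
    | zero => simpa using integrable_const (1 : ℝ)
    | succ j => simpa using hint1 j
  | succ i =>
    induction q using Fin.cases with
    | zero => simpa using hint1 i
    | succ j => simpa using hint2 i j

include hint1 hint2 hμ hSg in
lemma integral_wi_wj (i j : Fin n) : ∫ w, w i * w j ∂ν = Sg i j + μ i * μ j := by
  have hrw : (fun w : Fin n → ℝ => (w i - μ i) * (w j - μ j)) =
      fun w => w i * w j - μ i * w j - μ j * w i + μ i * μ j := by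
    funext w; ring
  have h1 := hSg i j
  rw [hrw] at h1
  have ia : Integrable (fun w : Fin n → ℝ => μ i * w j) ν := (hint1 j).const_mul (μ i)
  have ib : Integrable (fun w : Fin n → ℝ => μ j * w i) ν := (hint1 i).const_mul (μ j)
  have ic : Integrable (fun w : Fin n → ℝ => w i * w j - μ i * w j) ν := (hint2 i j).sub ia
  have id' : Integrable (fun w : Fin n → ℝ => w i * w j - μ i * w j - μ j * w i) ν := ic.sub ib
  rw [integral_add id' (integrable_const _), integral_sub ic ib, integral_sub (hint2 i j) ia,
    integral_const_mul, integral_const_mul, integral_const] at h1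
  simp only [probReal_univ, smul_eq_mul, one_mul] at h1
  rw [h1, ← hμ i, ← hμ j]
  ring

include hint1 hint2 hμ hSg in
lemma wb_integral (p q : Fin (n + 1)) :
    ∫ w, wb w p * wb w q ∂ν = tildeSigma μ Sg p q := by
  induction p using Fin.cases with
  | zero =>
    induction q using Fin.cases with
    | zero => simp
    | succ j => simp [← hμ j]
  | succ i =>
    induction q using Fin.cases with
    | zero => simp [← hμ i]
    | succ j => simpa using integral_wi_wj hint1 hint2 hμ hSg i j

include hSg in
lemma Sg_symm (i j : Fin n) : Sg i j = Sg j i := by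
  rw [hSg i j, hSg j i]
  have h : (fun w : Fin n → ℝ => (w i - μ i) * (w j - μ j)) =
      fun w => (w j - μ j) * (w i - μ i) := funext fun w => mul_comm _ _
  rw [h]

include hSg in
lemma tS_symm : (tildeSigma μ Sg)ᵀ = tildeSigma μ Sg := by
  ext p q
  rw [Matrix.transpose_apply]
  induction p using Fin.cases with
  | zero =>
    induction q using Fin.cases with
    | zero => rfl
    | succ j => simp
  | succ i =>
    induction q using Fin.cases with
    | zero => simp
    | succ j => rw [tildeSigma_succ_succ, tildeSigma_succ_succ, Sg_symm hSg i j]; ring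

include hint1 hint2 hμ hSg in
lemma tS_psd : (tildeSigma μ Sg).PosSemidef := by
  refine Matrix.PosSemidef.of_dotProduct_mulVec_nonneg (real_isHermitian (tS_symm hSg)) fun v => ?_
  have h1 : star v ⬝ᵥ (tildeSigma μ Sg *ᵥ v) =
      ∑ p, ∑ q, (v p * v q) * tildeSigma μ Sg p q := by
    simp only [star_trivial, dotProduct, Matrix.mulVec, Finset.mul_sum]
    apply Finset.sum_congr rfl; intro p _
    apply Finset.sum_congr rfl; intro q _
    ring
  have h2 : ∀ p q, (v p * v q) * tildeSigma μ Sg p q =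
      ∫ w, (v p * wb w p) * (v q * wb w q) ∂ν := by
    intro p q
    rw [← wb_integral hint1 hint2 hμ hSg p q, ← integral_const_mul]
    congr 1; funext w; ring
  rw [h1]
  simp only [h2]
  have hint : ∀ p q : Fin (n + 1),
      Integrable (fun w => (v p * wb w p) * (v q * wb w q)) ν := by
    intro p q
    have h := ((wb_int hint1 hint2 p q).const_mul (v p * v q))
    apply h.congr
    filter_upwards with w
    ring
  have h4 : ∀ p : Fin (n + 1), (∑ q, ∫ w, (v p * wb w p) * (v q * wb w q) ∂ν)
      = ∫ w, ∑ q, (v p * wb w p) * (v q * wb w q) ∂ν :=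
    fun p => (integral_finset_sum _ fun q _ => hint p q).symm
  simp only [h4]
  rw [← integral_finset_sum _ fun p _ => integrable_finset_sum _ fun q _ => hint p q]
  have h5 : (fun w => ∑ p, ∑ q : Fin (n + 1), (v p * wb w p) * (v q * wb w q))
      = fun w => (∑ p, v p * wb w p) ^ 2 := by
    funext w
    rw [sq, Finset.sum_mul_sum]
  rw [h5]
  exact integral_nonneg fun w => sq_nonneg _
end Probabilistic

section System
variable {n d m : ℕ}
  (A : Fin (n + 1) → Matrix (Fin d) (Fin d) ℝ)
  (B : Fin (n + 1) → Matrix (Fin d) (Fin m) ℝ)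
  (K : Matrix (Fin m) (Fin d) ℝ)

lemma M_eq (w : Fin n → ℝ) :
    Amat A w + Bmat B w * K = ∑ p, wb w p • (A p + B p * K) := by
  rw [Fin.sum_univ_succ]
  simp only [wb_zero, wb_succ, one_smul]
  unfold Amat Bmat
  rw [Matrix.add_mul, Matrix.sum_mul]
  simp only [smul_add, Matrix.smul_mul]
  rw [Finset.sum_add_distrib]
  abel

lemma slice_eq (p : Fin (n + 1)) :
    (Matrix.of fun a i => (Abar A + Bbar B * K) (p, a) i) = A p + B p * K := by
  ext a i
  simp [Abar, Bbar, Matrix.mul_apply, Matrix.add_apply]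

lemma Cbar_expand (St : Matrix (Fin (n + 1)) (Fin (n + 1)) ℝ) (P : Matrix (Fin d) (Fin d) ℝ)
    (hX : (St ⊗ₖ P)ᵀ = St ⊗ₖ P) :
    (Abar A + Bbar B * K)ᵀ * (St ⊗ₖ P) * (Abar A + Bbar B * K) =
      Fm A St P + Kᵀ * Hm A B St P + (Hm A B St P)ᵀ * K + Kᵀ * (Gm B St P * K) := by
  unfold Fm Gm Hm
  have h1 : ((Bbar B)ᵀ * (St ⊗ₖ P) * Abar A)ᵀ = (Abar A)ᵀ * ((St ⊗ₖ P) * Bbar B) := by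
    rw [Matrix.transpose_mul, Matrix.transpose_mul, Matrix.transpose_transpose, hX]
  rw [h1, Matrix.transpose_add, Matrix.transpose_mul]
  simp only [Matrix.add_mul, Matrix.mul_add, Matrix.mul_assoc]
  abel

variable {ν : Measure (Fin n → ℝ)} [IsProbabilityMeasure ν]
  (hint1 : ∀ i, Integrable (fun w : Fin n → ℝ => w i) ν)
  (hint2 : ∀ i j, Integrable (fun w : Fin n → ℝ => w i * w j) ν)
  {μ : Fin n → ℝ} (hμ : ∀ i, μ i = ∫ w, w i ∂ν)
  {Sg : Matrix (Fin n) (Fin n) ℝ}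
  (hSg : ∀ i j, Sg i j = ∫ w, (w i - μ i) * (w j - μ j) ∂ν)

include hint1 hint2 in
lemma int_MXMt (X : Matrix (Fin d) (Fin d) ℝ) (i j : Fin d) :
    Integrable (fun w =>
      ((Amat A w + Bmat B w * K) * X * (Amat A w + Bmat B w * K)ᵀ) i j) ν := by
  have h : (fun w => ((Amat A w + Bmat B w * K) * X * (Amat A w + Bmat B w * K)ᵀ) i j)
      = fun w => ∑ p, ∑ q,
          (wb w p * wb w q) * (((A p + B p * K) * X * (A q + B q * K)ᵀ) i j) := by
    funext w
    rw [M_eq A B K w, expandMXMt]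
    simp [Matrix.sum_apply, Matrix.smul_apply, smul_eq_mul]
  rw [h]
  exact integrable_finset_sum _ fun p _ => integrable_finset_sum _ fun q _ =>
    (wb_int hint1 hint2 p q).mul_const _

include hint1 hint2 in
lemma int_MtPM (P : Matrix (Fin d) (Fin d) ℝ) (i j : Fin d) :
    Integrable (fun w =>
      ((Amat A w + Bmat B w * K)ᵀ * P * (Amat A w + Bmat B w * K)) i j) ν := by
  have h : (fun w => ((Amat A w + Bmat B w * K)ᵀ * P * (Amat A w + Bmat B w * K)) i j)
      = fun w => ∑ p, ∑ q,
          (wb w p * wb w q) * (((A p + B p * K)ᵀ * P * (A q + B q * K)) i j) := by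
    funext w
    rw [M_eq A B K w, expandMtPM]
    simp [Matrix.sum_apply, Matrix.smul_apply, smul_eq_mul]
  rw [h]
  exact integrable_finset_sum _ fun p _ => integrable_finset_sum _ fun q _ =>
    (wb_int hint1 hint2 p q).mul_const _

include hint1 hint2 hμ hSg in
lemma integral_MtPM (P : Matrix (Fin d) (Fin d) ℝ) :
    (Matrix.of fun i j =>
        ∫ w, ((Amat A w + Bmat B w * K)ᵀ * P * (Amat A w + Bmat B w * K)) i j ∂ν)
      = (Abar A + Bbar B * K)ᵀ * (tildeSigma μ Sg ⊗ₖ P) * (Abar A + Bbar B * K) := by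
  ext i j
  rw [Matrix.of_apply]
  have hrhs : ((Abar A + Bbar B * K)ᵀ * (tildeSigma μ Sg ⊗ₖ P) * (Abar A + Bbar B * K)) i j
      = ∑ p, ∑ q, tildeSigma μ Sg p q * (((A p + B p * K)ᵀ * P * (A q + B q * K)) i j) := by
    rw [kron_stack]
    simp only [slice_eq A B K]
    simp [Matrix.sum_apply, Matrix.smul_apply, smul_eq_mul]
  rw [hrhs]
  have h : (fun w => ((Amat A w + Bmat B w * K)ᵀ * P * (Amat A w + Bmat B w * K)) i j)
      = fun w => ∑ p, ∑ q,
          (wb w p * wb w q) * (((A p + B p * K)ᵀ * P * (A q + B q * K)) i j) := by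
    funext w
    rw [M_eq A B K w, expandMtPM]
    simp [Matrix.sum_apply, Matrix.smul_apply, smul_eq_mul]
  rw [h]
  have hintpq : ∀ p q : Fin (n + 1), Integrable (fun w =>
      (wb w p * wb w q) * (((A p + B p * K)ᵀ * P * (A q + B q * K)) i j)) ν :=
    fun p q => (wb_int hint1 hint2 p q).mul_const _
  rw [integral_finset_sum _ fun p _ => integrable_finset_sum _ fun q _ => hintpq p q]
  apply Finset.sum_congr rfl; intro p _
  rw [integral_finset_sum _ fun q _ => hintpq p q]
  apply Finset.sum_congr rfl; intro q _
  rw [integral_mul_const, wb_integral hint1 hint2 hμ hSg p q]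

end System

section Swap
variable {n e : ℕ} {ν : Measure (Fin n → ℝ)} [IsProbabilityMeasure ν]

lemma trace_mul_integral (g : (Fin n → ℝ) → Matrix (Fin e) (Fin e) ℝ)
    (hg : ∀ i j, Integrable (fun w => g w i j) ν) (P : Matrix (Fin e) (Fin e) ℝ) :
    (P * (Matrix.of fun i j => ∫ w, g w i j ∂ν)).trace = ∫ w, (P * g w).trace ∂ν := by
  simp only [Matrix.trace, Matrix.diag, Matrix.mul_apply, Matrix.of_apply]
  have h1 : ∀ i j : Fin e, P i j * ∫ w, g w j i ∂ν = ∫ w, P i j * g w j i ∂ν :=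
    fun i j => (integral_const_mul _ _).symm
  simp only [h1]
  have h2 : ∀ i : Fin e, (∑ j, ∫ w, P i j * g w j i ∂ν) = ∫ w, ∑ j, P i j * g w j i ∂ν :=
    fun i => (integral_finset_sum _ fun j _ => (hg j i).const_mul _).symm
  simp only [h2]
  exact (integral_finset_sum _ fun i _ =>
    integrable_finset_sum _ fun j _ => (hg j i).const_mul _).symm

lemma dot_integral (g : (Fin n → ℝ) → Matrix (Fin e) (Fin e) ℝ)
    (hg : ∀ i j, Integrable (fun w => g w i j) ν) (v : Fin e → ℝ) :
    v ⬝ᵥ ((Matrix.of fun i j => ∫ w, g w i j ∂ν) *ᵥ v) = ∫ w, v ⬝ᵥ (g w *ᵥ v) ∂ν := by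
  simp only [dotProduct, Matrix.mulVec, Matrix.of_apply, Finset.mul_sum]
  have h1 : ∀ i j : Fin e, v i * ((∫ w, g w i j ∂ν) * v j) = ∫ w, v i * (g w i j * v j) ∂ν := by
    intro i j
    rw [← integral_mul_const, ← integral_const_mul]
  simp only [h1]
  have h2 : ∀ i : Fin e, (∑ j, ∫ w, v i * (g w i j * v j) ∂ν)
      = ∫ w, ∑ j, v i * (g w i j * v j) ∂ν :=
    fun i => (integral_finset_sum _ fun j _ => ((hg i j).mul_const _).const_mul _).symm
  simp only [h2]
  rw [← integral_finset_sum _ fun i _ =>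
    integrable_finset_sum _ fun j _ => ((hg i j).mul_const _).const_mul _]

lemma dot_MSMt (M S : Matrix (Fin e) (Fin e) ℝ) (v : Fin e → ℝ) :
    v ⬝ᵥ ((M * S * Mᵀ) *ᵥ v) = (Mᵀ *ᵥ v) ⬝ᵥ (S *ᵥ (Mᵀ *ᵥ v)) := by
  rw [Matrix.mul_assoc, ← Matrix.mulVec_mulVec, Matrix.dotProduct_mulVec,
    ← Matrix.mulVec_transpose, ← Matrix.mulVec_mulVec]

lemma trace_cyc (M P S : Matrix (Fin e) (Fin e) ℝ) :
    (P * (M * S * Mᵀ)).trace = ((Mᵀ * P * M) * S).trace := by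
  calc (P * (M * S * Mᵀ)).trace = ((P * (M * S)) * Mᵀ).trace := by
        simp only [Matrix.mul_assoc]
    _ = (Mᵀ * (P * (M * S))).trace := Matrix.trace_mul_comm _ _
    _ = ((Mᵀ * P * M) * S).trace := by simp only [Matrix.mul_assoc]
end Swap

lemma riccati_decomp {n d m : ℕ}
    (A : Fin (n + 1) → Matrix (Fin d) (Fin d) ℝ)
    (B : Fin (n + 1) → Matrix (Fin d) (Fin m) ℝ)
    (K : Matrix (Fin m) (Fin d) ℝ)
    (St : Matrix (Fin (n + 1)) (Fin (n + 1)) ℝ)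
    (Q P : Matrix (Fin d) (Fin d) ℝ) (R : Matrix (Fin m) (Fin m) ℝ)
    (hXsym : (St ⊗ₖ P)ᵀ = St ⊗ₖ P)
    (hGpsd : (Gm B St P).PosSemidef) (hR : R.PosDef)
    (hRic : P = Q + Fm A St P - (Hm A B St P)ᵀ * (R + Gm B St P)⁻¹ * Hm A B St P)
    (hK : K = -((R + Gm B St P)⁻¹ * Hm A B St P)) :
    Q + Kᵀ * R * K + (Abar A + Bbar B * K)ᵀ * (St ⊗ₖ P) * (Abar A + Bbar B * K) = P := by
  set H := Hm A B St P with hHdef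
  set G := Gm B St P with hGdef
  set F := Fm A St P with hFdef
  have hW : (R + G).PosDef := hR.add_posSemidef hGpsd
  have hWdet : IsUnit (R + G).det := hW.det_pos.ne'.isUnit
  have hWW : (R + G) * (R + G)⁻¹ = 1 := Matrix.mul_nonsing_inv _ hWdet
  have hGsym : Gᵀ = G := by rw [← realCT]; exact hGpsd.1
  have hRsym : Rᵀ = R := by rw [← realCT]; exact hR.1
  have hWsym : (R + G)ᵀ = R + G := by rw [Matrix.transpose_add, hRsym, hGsym]
  have hWiT : ((R + G)⁻¹)ᵀ = (R + G)⁻¹ := by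
    rw [Matrix.transpose_nonsing_inv, hWsym]
  have hKT : Kᵀ = -(Hᵀ * (R + G)⁻¹) := by
    rw [hK, Matrix.transpose_neg, Matrix.transpose_mul, hWiT]
  have hH1 : (R + G) * ((R + G)⁻¹ * H) = H := by
    rw [← Matrix.mul_assoc, hWW, Matrix.one_mul]
  have e1 : Kᵀ * R * K + Kᵀ * (G * K) = Hᵀ * ((R + G)⁻¹ * H) := by
    rw [hKT, hK]
    simp only [Matrix.neg_mul, Matrix.mul_neg, neg_neg, Matrix.mul_assoc]
    rw [← Matrix.mul_add, ← Matrix.mul_add, ← Matrix.add_mul, hH1]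
  have e2 : Kᵀ * H = -(Hᵀ * ((R + G)⁻¹ * H)) := by
    rw [hKT, Matrix.neg_mul, Matrix.mul_assoc]
  have e3 : Hᵀ * K = -(Hᵀ * ((R + G)⁻¹ * H)) := by
    rw [hK, Matrix.mul_neg]
  calc Q + Kᵀ * R * K + (Abar A + Bbar B * K)ᵀ * (St ⊗ₖ P) * (Abar A + Bbar B * K)
      = Q + Kᵀ * R * K + (F + Kᵀ * H + Hᵀ * K + Kᵀ * (G * K)) := by
        rw [Cbar_expand A B K St P hXsym]
    _ = Q + F + (Kᵀ * R * K + Kᵀ * (G * K)) + (Kᵀ * H + Hᵀ * K) := by abel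
    _ = Q + F + Hᵀ * ((R + G)⁻¹ * H) +
          (-(Hᵀ * ((R + G)⁻¹ * H)) + -(Hᵀ * ((R + G)⁻¹ * H))) := by rw [e1, e2, e3]
    _ = Q + F - Hᵀ * ((R + G)⁻¹ * H) := by abel
    _ = P := by rw [← Matrix.mul_assoc]; exact hRic.symm


/-- If `P ≻ 0` solves the Riccati equation and `K = −(R + G(P))⁻¹H(P)`, then
for every `x₀` the infinite-horizon closed-loop cost is finite and equals `x₀ᵀPx₀`:
`Σ_k tr((Q + KᵀRK) S_k(x₀)) = x₀ᵀPx₀`. -/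
theorem stmt13 {n d m : ℕ}
    (A : Fin (n + 1) → Matrix (Fin d) (Fin d) ℝ)
    (B : Fin (n + 1) → Matrix (Fin d) (Fin m) ℝ)
    (ν : Measure (Fin n → ℝ)) [IsProbabilityMeasure ν]
    (hint1 : ∀ i, Integrable (fun w : Fin n → ℝ => w i) ν)
    (hint2 : ∀ i j, Integrable (fun w : Fin n → ℝ => w i * w j) ν)
    (μ : Fin n → ℝ) (hμ : ∀ i, μ i = ∫ w, w i ∂ν)
    (Sg : Matrix (Fin n) (Fin n) ℝ)
    (hSg : ∀ i j, Sg i j = ∫ w, (w i - μ i) * (w j - μ j) ∂ν)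
    (Q : Matrix (Fin d) (Fin d) ℝ) (hQ : Q.PosDef)
    (R : Matrix (Fin m) (Fin m) ℝ) (hR : R.PosDef)
    (P : Matrix (Fin d) (Fin d) ℝ) (hP : P.PosDef)
    (hRic : P = Q + Fm A (tildeSigma μ Sg) P -
      (Hm A B (tildeSigma μ Sg) P)ᵀ * (R + Gm B (tildeSigma μ Sg) P)⁻¹ *
        Hm A B (tildeSigma μ Sg) P)
    (K : Matrix (Fin m) (Fin d) ℝ)
    (hK : K = -((R + Gm B (tildeSigma μ Sg) P)⁻¹ * Hm A B (tildeSigma μ Sg) P))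
    (x₀ : Fin d → ℝ) :
    HasSum
      (fun k => ((Q + Kᵀ * R * K) *
        Sseq ν (fun w => Amat A w + Bmat B w * K) x₀ k).trace)
      (x₀ ⬝ᵥ P *ᵥ x₀) := by
  classical
  set St := tildeSigma μ Sg with hStdef
  set Mw : (Fin n → ℝ) → Matrix (Fin d) (Fin d) ℝ := fun w => Amat A w + Bmat B w * K
    with hMwdef
  set S : ℕ → Matrix (Fin d) (Fin d) ℝ := Sseq ν Mw x₀ with hSdef
  have hMw : ∀ w, Mw w = Amat A w + Bmat B w * K := fun w => rfl
  -- symmetry and positivity facts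
  have hPsym : Pᵀ = P := by rw [← realCT]; exact hP.1
  have hStsym : Stᵀ = St := tS_symm hSg
  have hXsym : (St ⊗ₖ P)ᵀ = St ⊗ₖ P := by
    rw [← Matrix.kroneckerMap_transpose, hStsym, hPsym]
  have hXpsd : (St ⊗ₖ P).PosSemidef := kron_psd (tS_psd hint1 hint2 hμ hSg) hP.posSemidef
  have hGpsd : (Gm B St P).PosSemidef := by
    have h := hXpsd.conjTranspose_mul_mul_same (Bbar B)
    rwa [realCT] at h
  set T := (Abar A + Bbar B * K)ᵀ * (St ⊗ₖ P) * (Abar A + Bbar B * K) with hTdef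
  have hPT : Q + Kᵀ * R * K + T = P :=
    riccati_decomp A B K St Q P R hXsym hGpsd hR hRic hK
  -- integrability facts
  have hgint : ∀ (X : Matrix (Fin d) (Fin d) ℝ) (i j : Fin d),
      Integrable (fun w => (Mw w * X * (Mw w)ᵀ) i j) ν :=
    fun X i j => int_MXMt A B K hint1 hint2 X i j
  have hhint : ∀ i j : Fin d,
      Integrable (fun w => ((Mw w)ᵀ * P * Mw w) i j) ν :=
    fun i j => int_MtPM A B K hint1 hint2 P i j
  -- S k is PSD
  have hSpsd : ∀ k, (S k).PosSemidef := by
    intro k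
    induction k with
    | zero =>
      apply Matrix.PosSemidef.of_dotProduct_mulVec_nonneg
      · apply real_isHermitian
        ext i j
        show Matrix.vecMulVec x₀ x₀ j i = Matrix.vecMulVec x₀ x₀ i j
        simp only [Matrix.vecMulVec_apply]
        exact mul_comm _ _
      · intro v
        have hL : star v ⬝ᵥ (Matrix.vecMulVec x₀ x₀ *ᵥ v)
            = ∑ i, ∑ j, v i * (x₀ i * x₀ j * v j) := by
          simp only [star_trivial, dotProduct, Matrix.mulVec, Matrix.vecMulVec_apply,
            Finset.mul_sum]
        have hR0 : (∑ i, v i * x₀ i) * (∑ j, v j * x₀ j)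
            = ∑ i, ∑ j, v i * (x₀ i * x₀ j * v j) := by
          rw [Finset.sum_mul_sum]
          apply Finset.sum_congr rfl; intro i _
          apply Finset.sum_congr rfl; intro j _
          ring
        show 0 ≤ star v ⬝ᵥ (Matrix.vecMulVec x₀ x₀ *ᵥ v)
        rw [hL, ← hR0]
        exact mul_self_nonneg _
    | succ k ih =>
      have ihT : (S k)ᵀ = S k := by rw [← realCT]; exact ih.1
      have hSsucc : S (k + 1) = Matrix.of fun i j => ∫ w, (Mw w * S k * (Mw w)ᵀ) i j ∂ν := rfl
      have hgsym : ∀ w, (Mw w * S k * (Mw w)ᵀ)ᵀ = Mw w * S k * (Mw w)ᵀ := by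
        intro w
        simp only [Matrix.transpose_mul, Matrix.transpose_transpose, ihT, Matrix.mul_assoc]
      apply Matrix.PosSemidef.of_dotProduct_mulVec_nonneg
      · apply real_isHermitian
        ext i j
        rw [Matrix.transpose_apply, hSsucc, Matrix.of_apply, Matrix.of_apply]
        congr 1
        funext w
        exact congrFun (congrFun (hgsym w) i) j
      · intro v
        rw [star_trivial, hSsucc, dot_integral _ (hgint (S k)) v]
        apply integral_nonneg
        intro w
        show 0 ≤ v ⬝ᵥ ((Mw w * S k * (Mw w)ᵀ) *ᵥ v)
        rw [dot_MSMt]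
        have h := ih.dotProduct_mulVec_nonneg ((Mw w)ᵀ *ᵥ v)
        rwa [star_trivial] at h
  -- trace recursion
  set t : ℕ → ℝ := fun k => (P * S k).trace with htdef
  have htrec : ∀ k, t (k + 1) = (T * S k).trace := by
    intro k
    show (P * S (k + 1)).trace = (T * S k).trace
    rw [show S (k + 1) = Matrix.of fun i j => ∫ w, (Mw w * S k * (Mw w)ᵀ) i j ∂ν from rfl]
    rw [trace_mul_integral _ (hgint (S k)) P]
    have hpt : ∀ w, (P * (Mw w * S k * (Mw w)ᵀ)).trace
        = (((Mw w)ᵀ * P * Mw w) * S k).trace := fun w => trace_cyc _ _ _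
    simp only [hpt]
    calc ∫ w, (((Mw w)ᵀ * P * Mw w) * S k).trace ∂ν
        = ∫ w, (S k * ((Mw w)ᵀ * P * Mw w)).trace ∂ν := by
          congr 1; funext w; rw [Matrix.trace_mul_comm]
      _ = (S k * (Matrix.of fun i j => ∫ w, ((Mw w)ᵀ * P * Mw w) i j ∂ν)).trace :=
          (trace_mul_integral _ hhint (S k)).symm
      _ = ((Matrix.of fun i j => ∫ w, ((Mw w)ᵀ * P * Mw w) i j ∂ν) * S k).trace :=
          Matrix.trace_mul_comm _ _
      _ = (T * S k).trace := by
          rw [show (Matrix.of fun i j => ∫ w, ((Mw w)ᵀ * P * Mw w) i j ∂ν) = T from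
            integral_MtPM A B K hint1 hint2 hμ hSg P]
  -- stage cost
  have hstage : ∀ k, ((Q + Kᵀ * R * K) * S k).trace = t k - t (k + 1) := by
    intro k
    have hsub : Q + Kᵀ * R * K = P - T := by rw [← hPT]; abel
    rw [hsub, Matrix.sub_mul, Matrix.trace_sub, htrec k]
  -- positivity of stage cost and of t
  have hKRK : (Kᵀ * R * K).PosSemidef := by
    have h := hR.posSemidef.conjTranspose_mul_mul_same K
    rwa [realCT] at h
  have hQK : (Q + Kᵀ * R * K).PosSemidef := hQ.posSemidef.add hKRK
  have hf0 : ∀ k, 0 ≤ t k - t (k + 1) := by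
    intro k
    rw [← hstage k]
    exact trace_mul_nonneg' hQK (hSpsd k)
  have htn : ∀ k, 0 ≤ t k := fun k => trace_mul_nonneg' hP.posSemidef (hSpsd k)
  -- geometric decay
  obtain ⟨c, hc0, hc1, hcQP⟩ := exists_c hQ hP
  have hQKc : (Q + Kᵀ * R * K - c • P).PosSemidef := by
    have h : Q + Kᵀ * R * K - c • P = (Q - c • P) + Kᵀ * R * K := by abel
    rw [h]
    exact hcQP.add hKRK
  have hdec : ∀ k, t (k + 1) ≤ (1 - c) * t k := by
    intro k
    have h1 : 0 ≤ ((Q + Kᵀ * R * K - c • P) * S k).trace :=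
      trace_mul_nonneg' hQKc (hSpsd k)
    have h2 : ((Q + Kᵀ * R * K - c • P) * S k).trace = (t k - t (k + 1)) - c * t k := by
      rw [Matrix.sub_mul, Matrix.trace_sub, hstage k, Matrix.smul_mul, Matrix.trace_smul,
        smul_eq_mul]
    rw [h2] at h1
    nlinarith [htn k]
  have hlim : Tendsto t atTop (nhds 0) := tendsto_zero_of_decay hc0 hc1 htn hdec
  -- initial value
  have ht0 : t 0 = x₀ ⬝ᵥ P *ᵥ x₀ := by
    show (P * Matrix.vecMulVec x₀ x₀).trace = x₀ ⬝ᵥ P *ᵥ x₀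
    simp only [Matrix.trace, Matrix.diag, Matrix.mul_apply, Matrix.vecMulVec_apply,
      dotProduct, Matrix.mulVec, Finset.mul_sum]
    apply Finset.sum_congr rfl; intro i _
    apply Finset.sum_congr rfl; intro j _
    ring
  -- conclusion
  have hfun : (fun k => ((Q + Kᵀ * R * K) * S k).trace) = fun k => t k - t (k + 1) :=
    funext hstage
  rw [hfun, ← ht0]
  exact hasSum_telescope' hf0 hlim

end
end
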